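/- In the 2D guided reverse dynamics, the mass at the fully masked state evolves as q_t^{z,w}(N,N) = ((1-e^{-(T-t)})/(1-e^{-T}))^{-λ}, where -λ = Σ_{l_1} p(l_1)^{-w}p(l_1|z)^{1+w} + Σ_{l_2} p(l_2)^{-w}p(l_2|z)^{1+w}. In particular q_0^{z,w}(N,N) = 1 and q_T^{z,w}(N,N) = 0, and q_t^{z,w}(N,N) is strictly decreasing in t on [0,T). -/

import Mathlib

open Real Finset

/-- in the 2D guided reverse dynamics, the mass at the fully masked state
satisfies `q_t(N,N) = ((1-e^{-(T-t)})/(1-e^{-T}))^{-λ}` where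
`-λ = Σ_{l₁} p(l₁)^{-w} p(l₁|z)^{1+w} + Σ_{l₂} p(l₂)^{-w} p(l₂|z)^{1+w}`; in particular
`q_0(N,N) = 1`, `q_T(N,N) = 0`, and `t ↦ q_t(N,N)` is strictly decreasing on `[0,T)`. -/
theorem masked_mass_2d {ι : Type*} [Fintype ι] [DecidableEq ι]
    (p pz : ι × ι → ℝ)
    (hp0 : ∀ x, 0 ≤ p x) (hp1 : ∑ x, p x = 1)
    (hpz0 : ∀ x, 0 ≤ pz x) (hpz1 : ∑ x, pz x = 1)
    (hsupp : ∀ x, 0 < pz x → 0 < p x)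
    (w : ℝ) (hw : 0 < w)
    (lam : ℝ)
    (hlam : lam = -((∑ l1, (∑ l2, p (l1, l2)) ^ (-w) * (∑ l2, pz (l1, l2)) ^ (1 + w)) +
      ∑ l2, (∑ l1, p (l1, l2)) ^ (-w) * (∑ l1, pz (l1, l2)) ^ (1 + w)))
    (T : ℝ) (hT : 0 < T)
    (f : ℝ → ℝ)
    (hf0 : f 0 = 1)
    (hfc : ContinuousOn f (Set.Icc 0 T))
    (hode : ∀ t ∈ Set.Ico (0 : ℝ) T, HasDerivAt f
      (Real.exp (-(T - t)) / (1 - Real.exp (-(T - t))) * lam * f t) t) :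
    (∀ t ∈ Set.Icc (0 : ℝ) T,
        f t = ((1 - Real.exp (-(T - t))) / (1 - Real.exp (-T))) ^ (-lam)) ∧
      f 0 = 1 ∧ f T = 0 ∧ StrictAntiOn f (Set.Ico 0 T) := by
  -- notation
  set u : ℝ → ℝ := fun s => 1 - Real.exp (-(T - s)) with hu_def
  have hc : 0 < 1 - Real.exp (-T) := by
    have : Real.exp (-T) < 1 := Real.exp_lt_one_iff.2 (by linarith)
    linarith
  have hu_pos : ∀ s ∈ Set.Ico (0 : ℝ) T, 0 < u s := by
    intro s hs
    have h1 : Real.exp (-(T - s)) < 1 := Real.exp_lt_one_iff.2 (by linarith [hs.2])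
    show (0:ℝ) < 1 - Real.exp (-(T - s))
    linarith
  -- lam < 0
  have hlam_neg : lam < 0 := by
    have hA : ∀ l1 : ι, 0 ≤ (∑ l2, p (l1, l2)) ^ (-w) * (∑ l2, pz (l1, l2)) ^ (1 + w) :=
      fun l1 => mul_nonneg (Real.rpow_nonneg (Finset.sum_nonneg fun _ _ => hp0 _) _)
        (Real.rpow_nonneg (Finset.sum_nonneg fun _ _ => hpz0 _) _)
    have hB : ∀ l2 : ι, 0 ≤ (∑ l1, p (l1, l2)) ^ (-w) * (∑ l1, pz (l1, l2)) ^ (1 + w) :=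
      fun l2 => mul_nonneg (Real.rpow_nonneg (Finset.sum_nonneg fun _ _ => hp0 _) _)
        (Real.rpow_nonneg (Finset.sum_nonneg fun _ _ => hpz0 _) _)
    obtain ⟨x, -, hx⟩ : ∃ x ∈ (Finset.univ : Finset (ι × ι)), 0 < pz x := by
      by_contra h
      push_neg at h
      have : ∑ x, pz x ≤ 0 := Finset.sum_nonpos fun x hx => h x hx
      linarith [hpz1]
    obtain ⟨l1, l2⟩ := x
    have hmz : 0 < ∑ l2', pz (l1, l2') :=
      Finset.sum_pos' (fun _ _ => hpz0 _) ⟨l2, Finset.mem_univ _, hx⟩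
    have hmp : 0 < ∑ l2', p (l1, l2') := by
      refine Finset.sum_pos' (fun _ _ => hp0 _) ⟨l2, Finset.mem_univ _, hsupp _ hx⟩
    have hterm : 0 < (∑ l2', p (l1, l2')) ^ (-w) * (∑ l2', pz (l1, l2')) ^ (1 + w) :=
      mul_pos (Real.rpow_pos_of_pos hmp _) (Real.rpow_pos_of_pos hmz _)
    have hApos : 0 < ∑ l1', (∑ l2', p (l1', l2')) ^ (-w) * (∑ l2', pz (l1', l2')) ^ (1 + w) :=
      Finset.sum_pos' (fun i _ => hA i) ⟨l1, Finset.mem_univ _, hterm⟩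
    have hBpos : 0 ≤ ∑ l2', (∑ l1', p (l1', l2')) ^ (-w) * (∑ l1', pz (l1', l2')) ^ (1 + w) :=
      Finset.sum_nonneg fun i _ => hB i
    rw [hlam]; linarith
  -- the key invariant: f t * (u t)^lam is constant on [0, T)
  have hkey : ∀ t ∈ Set.Ico (0 : ℝ) T, f t * (u t) ^ lam = (1 - Real.exp (-T)) ^ lam := by
    intro t ht
    have hcont : ContinuousOn (fun s => f s * (u s) ^ lam) (Set.Icc 0 t) := by
      have hsub : Set.Icc (0 : ℝ) t ⊆ Set.Icc 0 T := Set.Icc_subset_Icc le_rfl ht.2.le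
      refine (hfc.mono hsub).mul ?_
      refine ContinuousOn.rpow_const ?_ ?_
      · exact ((continuous_const.sub ((continuous_const.sub continuous_id).neg.rexp)).continuousOn)
      · intro s hs
        exact Or.inl (ne_of_gt (hu_pos s ⟨hs.1, lt_of_le_of_lt hs.2 ht.2⟩))
    have hderiv : ∀ x ∈ Set.Ico (0 : ℝ) t,
        HasDerivWithinAt (fun s => f s * (u s) ^ lam) 0 (Set.Ici x) x := by
      intro x hx
      have hxT : x ∈ Set.Ico (0 : ℝ) T := ⟨hx.1, lt_trans hx.2 ht.2⟩
      have hux : 0 < u x := hu_pos x hxT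
      have hu' : HasDerivAt u (-Real.exp (-(T - x))) x := by
        have h1 : HasDerivAt (fun s : ℝ => -(T - s)) (-(-1)) x :=
          ((hasDerivAt_id x).const_sub T).neg
        rw [(by norm_num : -(-1:ℝ) = 1)] at h1
        have h2 := h1.exp
        rw [mul_one] at h2
        exact h2.const_sub 1
      have hr : HasDerivAt (fun s => (u s) ^ lam)
          (-Real.exp (-(T - x)) * lam * (u x) ^ (lam - 1)) x :=
        hu'.rpow_const (Or.inl (ne_of_gt hux))
      have hf' := hode x hxT
      have hmul := hf'.mul hr
      have hzero : Real.exp (-(T - x)) / (1 - Real.exp (-(T - x))) * lam * f x * u x ^ lam +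
          f x * (-Real.exp (-(T - x)) * lam * u x ^ (lam - 1)) = 0 := by
        have hus : u x ^ lam = u x ^ (lam - 1) * u x := by
          rw [← Real.rpow_add_one (ne_of_gt hux)]
          ring_nf
        have hueq : u x = 1 - Real.exp (-(T - x)) := rfl
        rw [hus, ← hueq]
        field_simp
        ring
      exact (hmul.congr_deriv hzero).hasDerivWithinAt
    have := constant_of_has_deriv_right_zero hcont hderiv t (Set.mem_Icc.2 ⟨ht.1, le_rfl⟩)
    have hu0 : u 0 = 1 - Real.exp (-T) := by simp [hu_def]
    rw [this, hf0, hu0, one_mul]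
  -- explicit formula on [0,T)
  have hform : ∀ t ∈ Set.Ico (0 : ℝ) T,
      f t = ((1 - Real.exp (-(T - t))) / (1 - Real.exp (-T))) ^ (-lam) := by
    intro t ht
    have hut : 0 < u t := hu_pos t ht
    have h1 := hkey t ht
    have h2 : f t = (1 - Real.exp (-T)) ^ lam * (u t) ^ (-lam) := by
      have : (u t) ^ lam ≠ 0 := ne_of_gt (Real.rpow_pos_of_pos hut _)
      field_simp at h1 ⊢
      rw [← h1]
      rw [mul_assoc, ← Real.rpow_add hut]
      simp
    rw [h2, Real.div_rpow hut.le hc.le, Real.rpow_neg hc.le lam]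
    rw [div_inv_eq_mul]
    ring
  -- continuity of the explicit formula; value at T
  have hgc : ContinuousOn (fun t => ((1 - Real.exp (-(T - t))) / (1 - Real.exp (-T))) ^ (-lam))
      (Set.Icc 0 T) := by
    apply ContinuousOn.rpow_const
    · exact (((continuous_const.sub ((continuous_const.sub continuous_id).neg.rexp)).div_const
        _).continuousOn)
    · intro s _
      exact Or.inr (by linarith)
  have hfT : f T = 0 := by
    have hTc : T ∈ closure (Set.Ico (0 : ℝ) T) := by
      rw [closure_Ico (ne_of_lt hT)]
      exact Set.right_mem_Icc.2 hT.le
    have hne : (nhdsWithin T (Set.Ico (0:ℝ) T)).NeBot := mem_closure_iff_nhdsWithin_neBot.1 hTc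
    have htf : Filter.Tendsto f (nhdsWithin T (Set.Ico (0:ℝ) T)) (nhds (f T)) :=
      (hfc T (Set.right_mem_Icc.2 hT.le)).mono Set.Ico_subset_Icc_self
    have htg : Filter.Tendsto
        (fun t => ((1 - Real.exp (-(T - t))) / (1 - Real.exp (-T))) ^ (-lam))
        (nhdsWithin T (Set.Ico (0:ℝ) T)) (nhds 0) := by
      have h := (hgc T (Set.right_mem_Icc.2 hT.le)).mono Set.Ico_subset_Icc_self
      have hval : (fun t => ((1 - Real.exp (-(T - t))) / (1 - Real.exp (-T))) ^ (-lam)) T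
          = 0 := by
        show ((1 - Real.exp (-(T - T))) / (1 - Real.exp (-T))) ^ (-lam) = 0
        simp [Real.zero_rpow (by linarith : -lam ≠ 0)]
      exact hval ▸ h
    have htf' : Filter.Tendsto f (nhdsWithin T (Set.Ico (0:ℝ) T)) (nhds 0) := by
      refine htg.congr' ?_
      filter_upwards [self_mem_nhdsWithin] with x hx
      exact (hform x hx).symm
    exact tendsto_nhds_unique htf htf'
  refine ⟨?_, hf0, hfT, ?_⟩
  · intro t ht
    rcases eq_or_lt_of_le ht.2 with h | h
    · rw [h, hfT]
      simp [Real.zero_rpow (by linarith : -lam ≠ 0)]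
    · exact hform t ⟨ht.1, h⟩
  · intro s hs t ht hst
    rw [hform s hs, hform t ht]
    have hus : 0 < u s := hu_pos s hs
    have hut : 0 < u t := hu_pos t ht
    have hbase : (1 - Real.exp (-(T - t))) / (1 - Real.exp (-T)) <
        (1 - Real.exp (-(T - s))) / (1 - Real.exp (-T)) := by
      have : Real.exp (-(T - s)) < Real.exp (-(T - t)) :=
        Real.exp_lt_exp.2 (by linarith)
      apply div_lt_div_of_pos_right (by linarith) hc
    exact Real.rpow_lt_rpow (by positivity) hbase (by linarith)
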